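/- For the sign character sgn_R of the automorphism group of a reduced root system R, the value sgn_R(v) for v ∈ Aut(R) equals (-1)^{|R|} times (-1)^{number of orbits of ⟨v⟩ on R}; equivalently, since |R| is even, sgn_R(v) = (-1)^{|⟨v⟩\R|}. -/

import Mathlib

open scoped RealInnerProductSpace

variable {V : Type*} [NormedAddCommGroup V] [InnerProductSpace ℝ V] [FiniteDimensional ℝ V]

/-- A (reduced) root system in a real inner product space: a finite set of nonzero vectors,
closed under the associated reflections, with integral pairings, and reduced. -/
structure RootSystemData (V : Type*) [NormedAddCommGroup V] [InnerProductSpace ℝ V] where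
  carrier : Finset V
  ne_zero : ∀ α ∈ carrier, α ≠ 0
  reduced : ∀ α ∈ carrier, ∀ t : ℝ, t • α ∈ carrier → t = 1 ∨ t = -1
  refl_mem : ∀ α ∈ carrier, ∀ β ∈ carrier, β - (2 * ⟪β, α⟫ / ⟪α, α⟫) • α ∈ carrier
  int_pairing : ∀ α ∈ carrier, ∀ β ∈ carrier, ∃ n : ℤ, (2 * ⟪β, α⟫ / ⟪α, α⟫) = (n : ℝ)

/-- The reflection in the root `α`: the orthogonal reflection in the hyperplane
perpendicular to `α`, as a linear automorphism of `V`. -/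
noncomputable def reflRoot (α : V) : V ≃ₗ[ℝ] V :=
  (Submodule.reflection ((ℝ ∙ α)ᗮ)).toLinearEquiv

/-- The automorphism group of a root system: linear automorphisms of `V` preserving the set of
roots. -/
def RootSystemData.aut (Rs : RootSystemData V) : Subgroup (V ≃ₗ[ℝ] V) where
  carrier := {g | ∀ α : V, α ∈ Rs.carrier ↔ g α ∈ Rs.carrier}
  one_mem' := fun α => Iff.rfl
  mul_mem' := by
    intro a b ha hb α
    exact (hb α).trans (ha (b α))
  inv_mem' := by
    intro a ha α
    constructor
    · intro h
      have := (ha (a⁻¹ α)).mpr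
      have h2 : a (a⁻¹ α) = α := a.apply_symm_apply α
      rw [h2] at this
      exact (ha (a⁻¹ α)).mpr (by rwa [h2])
    · intro h
      have h2 : a (a⁻¹ α) = α := a.apply_symm_apply α
      have := (ha (a⁻¹ α)).mp h
      rwa [h2] at this

/-- A system of simple roots (a base) of a root system: a linearly independent subset of the
roots such that every root is a nonnegative or a nonpositive combination of its elements. -/
def RootSystemData.IsSimpleSystem (Rs : RootSystemData V) (Δ : Finset V) : Prop :=
  ↑Δ ⊆ (Rs.carrier : Set V) ∧
  LinearIndependent ℝ (fun x : {x : V // x ∈ Δ} => x.1) ∧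
  ∀ α ∈ Rs.carrier,
    (∃ c : V → ℝ, (∀ β ∈ Δ, 0 ≤ c β) ∧ α = ∑ β ∈ Δ, c β • β) ∨
    (∃ c : V → ℝ, (∀ β ∈ Δ, c β ≤ 0) ∧ α = ∑ β ∈ Δ, c β • β)

/-- Parabolic subgroups of the automorphism group of a root system: for a system of simple
roots `Δ` and a subset `S ⊆ Δ`, the subgroup `A_{S ⊆ Δ} = W_S ⋊ Stab_{Aut(R,Δ)}(S)`, i.e. the
subgroup generated by the reflections in roots of `S` together with the automorphisms of the
root system stabilising `Δ` and `S` (setwise). -/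
def RootSystemData.IsParabolic (Rs : RootSystemData V) (P : Subgroup (V ≃ₗ[ℝ] V)) : Prop :=
  ∃ Δ S : Finset V, Rs.IsSimpleSystem Δ ∧ S ⊆ Δ ∧
    P = Subgroup.closure
      ((fun α => reflRoot α) '' ↑S ∪
        {g | g ∈ Rs.aut ∧ ⇑g '' ↑Δ = ↑Δ ∧ ⇑g '' ↑S = ↑S})

/-- An automorphism of a root system is elliptic if it belongs to no proper parabolic
subgroup of the automorphism group. -/
def RootSystemData.IsElliptic (Rs : RootSystemData V) (w : V ≃ₗ[ℝ] V) : Prop :=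
  ∀ P : Subgroup (V ≃ₗ[ℝ] V), Rs.IsParabolic P → P ≠ Rs.aut → w ∉ P

variable {V : Type*} [NormedAddCommGroup V] [InnerProductSpace ℝ V]

/-- The orbit equivalence relation of the cyclic group generated by a linear automorphism `v`
on a (stable) finite set of vectors. -/
def orbitSetoidOn (v : V ≃ₗ[ℝ] V) (S : Finset V) : Setoid {x : V // x ∈ S} where
  r x y := ∃ n : ℤ, (v ^ n) x.1 = y.1
  iseqv := by
    refine ⟨fun x => ⟨0, by rw [zpow_zero]; rfl⟩, ?_, ?_⟩
    · rintro x y ⟨n, hn⟩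
      exact ⟨-n, by rw [zpow_neg, ← hn]; exact (v ^ n).symm_apply_apply x.1⟩
    · rintro x y z ⟨m, hm⟩ ⟨n, hn⟩
      refine ⟨n + m, ?_⟩
      rw [zpow_add]
      show (v ^ n) ((v ^ m) x.1) = z.1
      rw [hm, hn]

section Refl
variable {V : Type*} [NormedAddCommGroup V] [InnerProductSpace ℝ V] [FiniteDimensional ℝ V]

lemma reflRoot_apply (α x : V) :
    reflRoot α x = x - (2 * ⟪x, α⟫ / ⟪α, α⟫) • α := by
  have h1 : reflRoot α x = 2 • (((ℝ ∙ α)ᗮ.starProjection x : V)) - x :=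
    Submodule.reflection_apply _
  rw [h1, Submodule.starProjection_orthogonal_val, Submodule.starProjection_singleton]
  rw [real_inner_comm x α, real_inner_self_eq_norm_sq]
  simp only [RCLike.ofReal_real_eq_id, id]
  match_scalars <;> ring

end Refl
set_option linter.unusedSectionVars false
set_option maxHeartbeats 1000000

open Equiv Equiv.Perm

section OrbitCount
variable {α : Type*} [Fintype α] [DecidableEq α]

/-- The setoid of the `SameCycle` relation of a permutation. -/
def sameCycleSetoid (σ : Perm α) : Setoid α where
  r := σ.SameCycle
  iseqv := ⟨SameCycle.refl σ, SameCycle.symm, SameCycle.trans⟩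

lemma card_sameCycle_quotient (σ : Perm α) :
    Nat.card (Quotient (sameCycleSetoid σ)) =
      Fintype.card {x // σ x = x} + σ.cycleFactorsFinset.card := by
  have hwd : ∀ x y : α, (sameCycleSetoid σ).r x y →
      (if h : σ x = x then (Sum.inl ⟨x, h⟩ : {x // σ x = x} ⊕ {c // c ∈ σ.cycleFactorsFinset})
       else Sum.inr ⟨σ.cycleOf x, cycleOf_mem_cycleFactorsFinset_iff.mpr (mem_support.mpr h)⟩) =
      (if h : σ y = y then (Sum.inl ⟨y, h⟩ : {x // σ x = x} ⊕ {c // c ∈ σ.cycleFactorsFinset})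
       else Sum.inr ⟨σ.cycleOf y, cycleOf_mem_cycleFactorsFinset_iff.mpr (mem_support.mpr h)⟩) := by
    intro x y hxy
    by_cases hx : σ x = x
    · have : y = x := by
        obtain ⟨n, hn⟩ := hxy
        rw [← hn]
        exact (Function.IsFixedPt.perm_zpow hx n)
      subst this
      rfl
    · have hy : ¬ σ y = y := by
        intro hy
        obtain ⟨n, hn⟩ := hxy.symm
        have hxy' : x = y := hn.symm.trans (Function.IsFixedPt.perm_zpow hy n)
        subst hxy'
        exact hx hy
      rw [dif_neg hx, dif_neg hy]
      exact congrArg _ (Subtype.ext hxy.cycleOf_eq)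
  classical
  set f : Quotient (sameCycleSetoid σ) → {x // σ x = x} ⊕ {c // c ∈ σ.cycleFactorsFinset} :=
    Quotient.lift _ hwd with hf
  have hbij : Function.Bijective f := by
    constructor
    · intro q1 q2
      induction q1 using Quotient.inductionOn with | _ x =>
      induction q2 using Quotient.inductionOn with | _ y =>
      intro h
      simp only [hf, Quotient.lift_mk] at h
      by_cases hx : σ x = x <;> by_cases hy : σ y = y <;>
        simp only [dif_pos, dif_neg, hx, hy] at h
      · cases h
        rfl
      · exact absurd h (by simp)
      · exact absurd h (by simp)
      · apply Quotient.sound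
        have hco : σ.cycleOf x = σ.cycleOf y := congrArg Subtype.val (Sum.inr_injective h)
        have hy' : y ∈ (σ.cycleOf y).support :=
          (mem_support_cycleOf_iff).mpr ⟨SameCycle.refl _ _, mem_support.mpr hy⟩
      -- y ∈ support (cycleOf x)
        rw [← hco] at hy'
        exact ((mem_support_cycleOf_iff).mp hy').1
    · rintro (⟨x, hx⟩ | ⟨c, hc⟩)
      · exact ⟨⟦x⟧, by simp only [hf, Quotient.lift_mk, dif_pos hx]⟩
      · have hcyc : c.IsCycle := (mem_cycleFactorsFinset_iff.mp hc).1
        obtain ⟨x, hx⟩ := hcyc.nonempty_support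
        have hxs : x ∈ σ.support := mem_cycleFactorsFinset_support_le hc hx
        have hxne : ¬ σ x = x := mem_support.mp hxs
        refine ⟨⟦x⟧, ?_⟩
        simp only [hf, Quotient.lift_mk, dif_neg hxne]
        exact congrArg _ (Subtype.ext (cycle_is_cycleOf hx hc).symm)
  calc Nat.card (Quotient (sameCycleSetoid σ))
      = Nat.card ({x // σ x = x} ⊕ {c // c ∈ σ.cycleFactorsFinset}) :=
        Nat.card_eq_of_bijective f hbij
    _ = _ := by
        rw [Nat.card_sum, Nat.card_eq_fintype_card, Nat.card_eq_fintype_card,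
          Fintype.card_coe]

lemma sign_eq_card_mul_orbits (σ : Perm α) :
    Perm.sign σ =
      (-1 : ℤˣ) ^ (Fintype.card α) * (-1) ^ (Nat.card (Quotient (sameCycleSetoid σ))) := by
  rw [card_sameCycle_quotient, sign_of_cycleType]
  have h1 : Multiset.card σ.cycleType = σ.cycleFactorsFinset.card := by
    rw [cycleType_def, Multiset.card_map]
    rfl
  have h2 : σ.cycleType.sum = σ.support.card := sum_cycleType σ
  have h3 : Fintype.card {x // σ x = x} + σ.support.card = Fintype.card α := by
    classical
    rw [Fintype.card_subtype]
    have : σ.support = Finset.univ.filter (fun x => ¬ σ x = x) := by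
      ext x; simp [mem_support]
    rw [this]
    exact Finset.card_filter_add_card_filter_not _
  rw [h1, h2, ← pow_add]
  have : Fintype.card α + (Fintype.card {x // σ x = x} + σ.cycleFactorsFinset.card)
      = 2 * Fintype.card {x // σ x = x} + (σ.support.card + σ.cycleFactorsFinset.card) := by
    omega
  rw [this]
  conv_rhs => rw [pow_add, pow_mul, Int.units_sq, one_pow]
  rw [one_mul]

end OrbitCount
section Doubling
variable {α : Type*} [Fintype α] [DecidableEq α]

lemma sign_eq_one_of_double (π : Perm α) (P : α → Prop) (ν : Perm α)
    (hν : ∀ x, ν (ν x) = x)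
    (hνP : ∀ x, ¬ P x → P (ν x))
    (hdisj : ∀ x, ¬ (P x ∧ P (ν x)))
    (hcomm : ∀ x, π (ν x) = ν (π x))
    (hpos : ∀ x, P x → P (π x)) :
    Perm.sign π = 1 := by
  classical
  have hrev : ∀ x, P (π x) → P x := by
    intro x hπx
    by_contra hx
    have h1 : P (ν x) := hνP x hx
    have h2 : P (π (ν x)) := hpos _ h1
    rw [hcomm] at h2
    exact hdisj (π x) ⟨hπx, h2⟩
  have hiff : ∀ x, P x ↔ P (π x) := fun x => ⟨hpos x, hrev x⟩
  set σ : Perm {x // P x} := Equiv.subtypeEquiv π hiff with hσ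
  set E : α ≃ {x // P x} ⊕ {x // P x} :=
    { toFun := fun x => if h : P x then Sum.inl ⟨x, h⟩ else Sum.inr ⟨ν x, hνP x h⟩
      invFun := Sum.elim (fun p => p.1) (fun p => ν p.1)
      left_inv := by
        intro x
        by_cases h : P x
        · simp [h]
        · simp [h, hν]
      right_inv := by
        rintro (⟨x, h⟩ | ⟨x, h⟩)
        · simp [h]
        · have : ¬ P (ν x) := fun hc => hdisj x ⟨h, hc⟩
          simp only [Sum.elim_inr, this, dif_neg, not_false_iff]
          exact (dif_neg this).trans (congrArg Sum.inr (Subtype.ext (hν x))) } with hE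
  have key : E.permCongr π = Equiv.sumCongr σ σ := by
    ext z
    rcases z with ⟨x, h⟩ | ⟨x, h⟩
    · have h2 : P (π x) := hpos x h
      simp only [Equiv.permCongr_apply, hE, Equiv.coe_fn_mk, Equiv.coe_fn_symm_mk,
        Sum.elim_inl, Equiv.sumCongr_apply, Sum.map_inl, dif_pos h2]
      rfl
    · have h2 : P (π x) := hpos x h
      have h3 : ¬ P (ν (π x)) := fun hc => hdisj (π x) ⟨h2, hc⟩
      simp only [Equiv.permCongr_apply, hE, Equiv.coe_fn_mk, Equiv.coe_fn_symm_mk,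
        Sum.elim_inr, Equiv.sumCongr_apply, Sum.map_inr, hcomm, dif_neg h3]
      refine congrArg _ (Subtype.ext ?_)
      show ν (ν (π x)) = ((σ ⟨x, h⟩ : {x // P x}) : α)
      rw [hν]
      rfl
  have := Equiv.Perm.sign_permCongr E π
  rw [key, Equiv.Perm.sign_sumCongr] at this
  rw [← this, Int.units_mul_self]

lemma sign_eq_neg_one_of_refl (π : Perm α) (P : α → Prop) (ν : Perm α) (a : α)
    (hν : ∀ x, ν (ν x) = x)
    (hνP : ∀ x, ¬ P x → P (ν x))
    (hdisj : ∀ x, ¬ (P x ∧ P (ν x)))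
    (hcomm : ∀ x, π (ν x) = ν (π x))
    (haP : P a)
    (hπa : π a = ν a)
    (hpos : ∀ x, P x → x ≠ a → P (π x) ∧ π x ≠ a ∧ π x ≠ ν a) :
    Perm.sign π = -1 := by
  classical
  have hane : a ≠ ν a := by
    intro h
    exact hdisj a ⟨haP, h ▸ haP⟩
  have hswapν : ∀ y, Equiv.swap a (ν a) (ν y) = ν (Equiv.swap a (ν a) y) := by
    intro y
    by_cases h1 : y = a
    · subst h1
      rw [Equiv.swap_apply_left, Equiv.swap_apply_right, hν]
    · by_cases h2 : y = ν a
      · subst h2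
        rw [hν, Equiv.swap_apply_left, Equiv.swap_apply_right]
      · have h3 : ν y ≠ a := fun hc => h2 (by rw [← hc, hν])
        have h4 : ν y ≠ ν a := fun hc => h1 (by rw [← hν y, hc, hν])
        rw [Equiv.swap_apply_of_ne_of_ne h3 h4, Equiv.swap_apply_of_ne_of_ne h1 h2]
  set τ : Perm α := Equiv.swap a (ν a) * π with hτ
  have hτ1 : Perm.sign τ = 1 := by
    apply sign_eq_one_of_double τ P ν hν hνP hdisj
    · intro x
      show Equiv.swap a (ν a) (π (ν x)) = ν (Equiv.swap a (ν a) (π x))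
      rw [hcomm, hswapν]
    · intro x hx
      by_cases h1 : x = a
      · show P (Equiv.swap a (ν a) (π x))
        rw [h1, hπa, Equiv.swap_apply_right]
        exact haP
      · obtain ⟨hp, hna, hnνa⟩ := hpos x hx h1
        show P (Equiv.swap a (ν a) (π x))
        rw [Equiv.swap_apply_of_ne_of_ne hna hnνa]
        exact hp
  have hπτ : π = Equiv.swap a (ν a) * τ := by
    rw [hτ, ← mul_assoc, Equiv.swap_mul_self, one_mul]
  rw [hπτ, map_mul, hτ1, mul_one, Equiv.Perm.sign_swap hane]

end Doubling
section Roots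
variable {V : Type*} [NormedAddCommGroup V] [InnerProductSpace ℝ V] [FiniteDimensional ℝ V]

/-- Positivity of a vector w.r.t. a set `Δ`: it is a nonnegative combination of `Δ`. -/
def RSPos (Δ : Finset V) (α : V) : Prop :=
  ∃ c : V → ℝ, (∀ β ∈ Δ, 0 ≤ c β) ∧ α = ∑ β ∈ Δ, c β • β

variable {Rs : RootSystemData V} {Δ : Finset V}

lemma coeff_unique (hΔ : Rs.IsSimpleSystem Δ) {c d : V → ℝ}
    (h : ∑ β ∈ Δ, c β • β = ∑ β ∈ Δ, d β • β) : ∀ β ∈ Δ, c β = d β := by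
  have hli := hΔ.2.1
  rw [linearIndependent_iff'] at hli
  have hsum : ∑ i : {x // x ∈ Δ}, (c i.1 - d i.1) • i.1 = 0 := by
    have := Finset.sum_coe_sort Δ (fun β => (c β - d β) • β)
    rw [this]
    simp only [sub_smul, Finset.sum_sub_distrib, h, sub_self]
  intro β hβ
  have h0 : c β - d β = 0 := hli Finset.univ (fun i => c i.1 - d i.1) hsum ⟨β, hβ⟩ (Finset.mem_univ _)
  linarith

lemma neg_mem_carrier {α : V} (hα : α ∈ Rs.carrier) : -α ∈ Rs.carrier := by
  have h0 : α ≠ 0 := Rs.ne_zero α hα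
  have hin : ⟪α, α⟫ ≠ 0 := by
    exact inner_self_ne_zero.mpr h0
  have := Rs.refl_mem α hα α hα
  have heq : α - (2 * ⟪α, α⟫ / ⟪α, α⟫) • α = -α := by
    rw [mul_div_assoc, div_self hin, mul_one]
    module
  rwa [heq] at this

lemma pos_or_negpos (hΔ : Rs.IsSimpleSystem Δ) {α : V} (hα : α ∈ Rs.carrier) :
    RSPos Δ α ∨ RSPos Δ (-α) := by
  rcases hΔ.2.2 α hα with ⟨c, hc, hsum⟩ | ⟨c, hc, hsum⟩
  · exact Or.inl ⟨c, hc, hsum⟩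
  · refine Or.inr ⟨fun β => -(c β), fun β hβ => by simpa using hc β hβ, ?_⟩
    rw [hsum, ← Finset.sum_neg_distrib]
    refine Finset.sum_congr rfl fun β _ => ?_
    simp [neg_smul]

lemma not_pos_both (hΔ : Rs.IsSimpleSystem Δ) {α : V} (hα : α ≠ 0)
    (h1 : RSPos Δ α) (h2 : RSPos Δ (-α)) : False := by
  obtain ⟨c, hc, hcs⟩ := h1
  obtain ⟨d, hd, hds⟩ := h2
  have hsum : ∑ β ∈ Δ, c β • β = ∑ β ∈ Δ, (-(d β)) • β := by
    rw [← hcs]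
    have : α = - ∑ β ∈ Δ, d β • β := neg_eq_iff_eq_neg.mp hds
    rw [this, ← Finset.sum_neg_distrib]
    exact Finset.sum_congr rfl fun β _ => by rw [neg_smul]
  have hz : ∀ β ∈ Δ, c β = 0 := by
    intro β hβ
    have := coeff_unique hΔ hsum β hβ
    have h1 := hc β hβ
    have h2 := hd β hβ
    linarith
  apply hα
  rw [hcs]
  exact Finset.sum_eq_zero fun β hβ => by rw [hz β hβ, zero_smul]

lemma simple_pos {δ : V} (hδ : δ ∈ Δ) : RSPos Δ δ := by
  classical
  refine ⟨fun x => if x = δ then 1 else 0, fun β _ => by dsimp only; split <;> norm_num, ?_⟩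
  simp only [ite_smul, one_smul, zero_smul]
  rw [Finset.sum_ite_eq' Δ δ (fun x => x), if_pos hδ]

lemma pos_vec_ne_neg_simple (hΔ : Rs.IsSimpleSystem Δ) {α δ : V}
    (hαR : α ∈ Rs.carrier) (hpos : RSPos Δ α) (hδ : δ ∈ Δ) : α ≠ -δ := by
  intro h
  have hδpos : RSPos Δ δ := simple_pos hδ
  have : RSPos Δ (-α) := by rw [h, neg_neg]; exact hδpos
  exact not_pos_both hΔ (Rs.ne_zero α hαR) hpos this

end Roots
section Roots2
variable {V : Type*} [NormedAddCommGroup V] [InnerProductSpace ℝ V] [FiniteDimensional ℝ V]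
variable {Rs : RootSystemData V} {Δ : Finset V}

lemma reflRoot_involutive (α : V) (x : V) : reflRoot α (reflRoot α x) = x :=
  Submodule.reflection_reflection _ x

lemma reflRoot_self {δ : V} (hδ : δ ≠ 0) : reflRoot δ δ = -δ := by
  rw [reflRoot_apply]
  have hin : ⟪δ, δ⟫ ≠ 0 := inner_self_ne_zero.mpr hδ
  rw [mul_div_assoc, div_self hin, mul_one]
  module

lemma reflRoot_mem_carrier {δ α : V} (hδ : δ ∈ Rs.carrier) (hα : α ∈ Rs.carrier) :
    reflRoot δ α ∈ Rs.carrier := by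
  rw [reflRoot_apply]
  exact Rs.refl_mem δ hδ α hα

lemma reflRoot_mem_aut {δ : V} (hδ : δ ∈ Rs.carrier) : reflRoot δ ∈ Rs.aut := by
  intro α
  constructor
  · intro hα
    exact reflRoot_mem_carrier hδ hα
  · intro hα
    have := reflRoot_mem_carrier hδ hα
    rwa [reflRoot_involutive] at this

/-- A positive root other than `δ` has a strictly positive coefficient at some simple root
other than `δ`. -/
lemma exists_other_coeff (hΔ : Rs.IsSimpleSystem Δ) {α δ : V} (hα : α ∈ Rs.carrier)
    (hδ : δ ∈ Δ) (hne : α ≠ δ) {c : V → ℝ} (hc : ∀ β ∈ Δ, 0 ≤ c β)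
    (hsum : α = ∑ β ∈ Δ, c β • β) :
    ∃ β ∈ Δ, β ≠ δ ∧ 0 < c β := by
  by_contra hcon
  push_neg at hcon
  have hz : ∀ β ∈ Δ, β ≠ δ → c β = 0 := by
    intro β hβ hne'
    have := hcon β hβ hne'
    have := hc β hβ
    linarith
  have hαδ : α = c δ • δ := by
    classical
    rw [hsum, Finset.sum_eq_single_of_mem δ hδ]
    intro β hβ hne'
    rw [hz β hβ hne', zero_smul]
  have := Rs.reduced δ (hΔ.1 hδ) (c δ) (by rw [← hαδ]; exact hα)
  rcases this with h1 | h1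
  · exact hne (by rw [hαδ, h1, one_smul])
  · have : α = -δ := by rw [hαδ, h1]; module
    have hpos : RSPos Δ α := ⟨c, hc, hsum⟩
    exact pos_vec_ne_neg_simple hΔ hα hpos hδ this

/-- The key lemma: a simple reflection permutes the positive roots other than the simple
root itself. -/
lemma reflRoot_pos (hΔ : Rs.IsSimpleSystem Δ) {α δ : V} (hα : α ∈ Rs.carrier)
    (hδ : δ ∈ Δ) (hne : α ≠ δ) (hpos : RSPos Δ α) :
    RSPos Δ (reflRoot δ α) ∧ reflRoot δ α ≠ δ := by
  classical
  have hδR : δ ∈ Rs.carrier := hΔ.1 hδ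
  have hδ0 : δ ≠ 0 := Rs.ne_zero δ hδR
  have hmem : reflRoot δ α ∈ Rs.carrier := reflRoot_mem_carrier hδR hα
  obtain ⟨c, hc, hsum⟩ := hpos
  obtain ⟨β₀, hβ₀, hβ₀ne, hβ₀pos⟩ := exists_other_coeff hΔ hα hδ hne hc hsum
  set k : ℝ := 2 * ⟪α, δ⟫ / ⟪δ, δ⟫ with hk
  set c' : V → ℝ := fun x => if x = δ then c δ - k else c x with hc'
  have hdiff : ∑ β ∈ Δ, c' β • β = (∑ β ∈ Δ, c β • β) - k • δ := by
    have h0 : ∑ β ∈ Δ, c' β • β - ∑ β ∈ Δ, c β • β = -(k • δ) := by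
      rw [← Finset.sum_sub_distrib,
        Finset.sum_eq_single_of_mem δ hδ (fun β hβ hne' => by
          rw [hc']; simp only [if_neg hne', sub_self])]
      rw [hc']
      show (if δ = δ then c δ - k else c δ) • δ - c δ • δ = -(k • δ)
      rw [if_pos rfl, ← sub_smul]
      module
    rw [sub_eq_iff_eq_add] at h0
    rw [h0]
    abel
  have hexp : reflRoot δ α = ∑ β ∈ Δ, c' β • β := by
    rw [reflRoot_apply, ← hk, hdiff, ← hsum]
  have hposr : RSPos Δ (reflRoot δ α) := by
    rcases pos_or_negpos hΔ hmem with h | h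
    · exact h
    · exfalso
      obtain ⟨d, hd, hds⟩ := h
      have heq : ∑ β ∈ Δ, c' β • β = ∑ β ∈ Δ, (-(d β)) • β := by
        rw [← hexp]
        have : reflRoot δ α = - ∑ β ∈ Δ, d β • β := neg_eq_iff_eq_neg.mp hds
        rw [this, ← Finset.sum_neg_distrib]
        exact Finset.sum_congr rfl fun β _ => by rw [neg_smul]
      have := coeff_unique hΔ heq β₀ hβ₀
      have h1 : c' β₀ = c β₀ := by rw [hc']; simp [hβ₀ne]
      have h2 := hd β₀ hβ₀
      rw [h1] at this
      linarith
  refine ⟨hposr, ?_⟩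
  intro hcon
  have : reflRoot δ (reflRoot δ α) = reflRoot δ δ := by rw [hcon]
  rw [reflRoot_involutive, reflRoot_self hδ0] at this
  exact pos_vec_ne_neg_simple hΔ hα ⟨c, hc, hsum⟩ hδ this

end Roots2
section Roots3
variable {V : Type*} [NormedAddCommGroup V] [InnerProductSpace ℝ V] [FiniteDimensional ℝ V]
variable {Rs : RootSystemData V} {Δ : Finset V}

lemma rsp_inner_self_pos {x : V} (hx : x ≠ 0) : (0:ℝ) < ⟪x, x⟫ :=
  lt_of_le_of_ne real_inner_self_nonneg (Ne.symm (inner_self_ne_zero.mpr hx))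

lemma exists_inner_pos_simple (hΔ : Rs.IsSimpleSystem Δ) {α : V} (hα : α ∈ Rs.carrier)
    (hpos : RSPos Δ α) : ∃ δ ∈ Δ, 0 < ⟪α, δ⟫ := by
  by_contra hcon
  push_neg at hcon
  obtain ⟨c, hc, hsum⟩ := hpos
  have h1 : (0:ℝ) < ⟪α, α⟫ := rsp_inner_self_pos (Rs.ne_zero α hα)
  have h2 : ⟪α, α⟫ = ∑ β ∈ Δ, c β * ⟪α, β⟫ := by
    conv_lhs => rw [show ⟪α, α⟫ = ⟪α, ∑ β ∈ Δ, c β • β⟫ by rw [← hsum]]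
    rw [inner_sum]
    exact Finset.sum_congr rfl fun β _ => real_inner_smul_right α β (c β)
  have h3 : ∑ β ∈ Δ, c β * ⟪α, β⟫ ≤ 0 :=
    Finset.sum_nonpos fun β hβ => mul_nonpos_of_nonneg_of_nonpos (hc β hβ) (hcon β hβ)
  linarith

/-- If two non-proportional roots have positive inner product, their difference is a root. -/
lemma sub_mem_of_inner_pos {α δ : V} (hα : α ∈ Rs.carrier) (hδ : δ ∈ Rs.carrier)
    (hin : 0 < ⟪α, δ⟫) (h1 : α ≠ δ) (h2 : α ≠ -δ) : α - δ ∈ Rs.carrier := by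
  have hα0 : α ≠ 0 := Rs.ne_zero α hα
  have hδ0 : δ ≠ 0 := Rs.ne_zero δ hδ
  have hαα : (0:ℝ) < ⟪α, α⟫ := rsp_inner_self_pos hα0
  have hδδ : (0:ℝ) < ⟪δ, δ⟫ := rsp_inner_self_pos hδ0
  obtain ⟨m, hm⟩ := Rs.int_pairing δ hδ α hα
  obtain ⟨n, hn⟩ := Rs.int_pairing α hα δ hδ
  -- hm : 2 * ⟪α, δ⟫ / ⟪δ, δ⟫ = m, hn : 2 * ⟪δ, α⟫ / ⟪α, α⟫ = n
  have hmpos : (0:ℝ) < m := by rw [← hm]; positivity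
  have hnpos : (0:ℝ) < n := by
    rw [← hn, real_inner_comm α δ]
    positivity
  -- strict Cauchy-Schwarz
  have hcs : ⟪α, δ⟫ ^ 2 < ⟪α, α⟫ * ⟪δ, δ⟫ := by
    set p : ℝ := ⟪α, δ⟫ / ⟪δ, δ⟫ with hp
    have hw : α - p • δ ≠ 0 := by
      intro hcon
      have : α = p • δ := by
        have := sub_eq_zero.mp hcon
        exact this
      rcases Rs.reduced δ hδ p (by rw [← this]; exact hα) with h | h
      · exact h1 (by rw [this, h, one_smul])
      · exact h2 (by rw [this, h]; module)
    have hw2 : (0:ℝ) < ⟪α - p • δ, α - p • δ⟫ := rsp_inner_self_pos hw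
    have hexp : ⟪α - p • δ, α - p • δ⟫ = ⟪α, α⟫ - ⟪α, δ⟫ ^ 2 / ⟪δ, δ⟫ := by
      rw [inner_sub_sub_self]
      rw [real_inner_smul_right, real_inner_smul_left, real_inner_smul_left,
        real_inner_smul_right]
      rw [hp]
      field_simp
      ring_nf
      rw [real_inner_comm δ α]
      ring
    rw [hexp] at hw2
    have := (div_lt_iff₀ hδδ).mp (by linarith : ⟪α, δ⟫ ^ 2 / ⟪δ, δ⟫ < ⟪α, α⟫)
    linarith
  have hprod : (m : ℝ) * n < 4 := by
    have hmn : (m:ℝ) * n = 4 * ⟪α, δ⟫ ^ 2 / (⟪δ, δ⟫ * ⟪α, α⟫) := by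
      rw [← hm, ← hn, real_inner_comm δ α]
      field_simp
      ring
    rw [hmn]
    rw [div_lt_iff₀ (by positivity)]
    nlinarith
  have hm1 : (1:ℤ) ≤ m := by exact_mod_cast hmpos
  have hn1 : (1:ℤ) ≤ n := by exact_mod_cast hnpos
  have hmn4 : m * n < 4 := by exact_mod_cast hprod
  have hcase : m = 1 ∨ n = 1 := by
    by_contra hcon
    push_neg at hcon
    have hm2 : (2:ℤ) ≤ m := by omega
    have hn2 : (2:ℤ) ≤ n := by omega
    nlinarith
  rcases hcase with h | h
  · have := Rs.refl_mem δ hδ α hα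
    rw [hm, h] at this
    simpa using this
  · have := Rs.refl_mem α hα δ hδ
    rw [hn, h] at this
    have h4 : δ - (1:ℝ) • α ∈ Rs.carrier := by exact_mod_cast this
    have h5 : -(δ - (1:ℝ) • α) ∈ Rs.carrier := neg_mem_carrier h4
    have : -(δ - (1:ℝ) • α) = α - δ := by module
    rwa [this] at h5

/-- A simple root is not the sum of two positive roots. -/
lemma simple_indec (hΔ : Rs.IsSimpleSystem Δ) {δ : V} (hδ : δ ∈ Δ) :
    ¬ ∃ β γ : V, β ∈ Rs.carrier ∧ RSPos Δ β ∧ γ ∈ Rs.carrier ∧ RSPos Δ γ ∧ δ = β + γ := by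
  classical
  rintro ⟨β, γ, hβR, ⟨b, hb, hbs⟩, hγR, ⟨c, hc, hcs⟩, hsum⟩
  have hde : δ = ∑ x ∈ Δ, (b x + c x) • x := by
    rw [hsum, hbs, hcs, ← Finset.sum_add_distrib]
    exact Finset.sum_congr rfl fun x _ => by rw [add_smul]
  have hdi : δ = ∑ x ∈ Δ, (fun y => if y = δ then (1:ℝ) else 0) x • x := by
    simp only [ite_smul, one_smul, zero_smul]
    rw [Finset.sum_ite_eq' Δ δ (fun x => x), if_pos hδ]
  have huniq : ∀ x ∈ Δ, b x + c x = (fun y => if y = δ then (1:ℝ) else 0) x :=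
    coeff_unique hΔ (by rw [← hde, ← hdi])
  have hz : ∀ x ∈ Δ, x ≠ δ → b x = 0 ∧ c x = 0 := by
    intro x hx hne
    have := huniq x hx
    simp only [if_neg hne] at this
    have h1 := hb x hx
    have h2 := hc x hx
    constructor <;> linarith
  have hβδ : β = b δ • δ := by
    rw [hbs, Finset.sum_eq_single_of_mem δ hδ]
    intro x hx hne
    rw [(hz x hx hne).1, zero_smul]
  have hbδ1 : b δ = 1 := by
    rcases Rs.reduced δ (hΔ.1 hδ) (b δ) (by rw [← hβδ]; exact hβR) with h | h
    · exact h
    · exfalso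
      have := hb δ hδ
      rw [h] at this
      linarith
  have hcδ : c δ = 0 := by
    have := huniq δ hδ
    norm_num at this
    linarith
  have hγ0 : γ = 0 := by
    rw [hcs]
    refine Finset.sum_eq_zero fun x hx => ?_
    by_cases hne : x = δ
    · rw [hne, hcδ, zero_smul]
    · rw [(hz x hx hne).2, zero_smul]
  exact Rs.ne_zero γ hγR hγ0

/-- An indecomposable positive root is simple. -/
lemma pos_indec_mem_simple (hΔ : Rs.IsSimpleSystem Δ) {α : V} (hα : α ∈ Rs.carrier)
    (hpos : RSPos Δ α)
    (hind : ¬ ∃ β γ : V, β ∈ Rs.carrier ∧ RSPos Δ β ∧ γ ∈ Rs.carrier ∧ RSPos Δ γ ∧ α = β + γ) :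
    α ∈ Δ := by
  by_contra hαΔ
  obtain ⟨δ, hδ, hin⟩ := exists_inner_pos_simple hΔ hα hpos
  have hδR : δ ∈ Rs.carrier := hΔ.1 hδ
  have h1 : α ≠ δ := fun h => hαΔ (h ▸ hδ)
  have h2 : α ≠ -δ := pos_vec_ne_neg_simple hΔ hα hpos hδ
  have hsub : α - δ ∈ Rs.carrier := sub_mem_of_inner_pos hα hδR hin h1 h2
  rcases pos_or_negpos hΔ hsub with h | h
  · exact hind ⟨α - δ, δ, hsub, h, hδR, simple_pos hδ, by module⟩
  · have hneg : δ - α ∈ Rs.carrier := by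
      have := neg_mem_carrier hsub
      rwa [show -(α - δ) = δ - α by module] at this
    have hnegpos : RSPos Δ (δ - α) := by
      rwa [show -(α - δ) = δ - α by module] at h
    exact simple_indec hΔ hδ ⟨δ - α, α, hneg, hnegpos, hα, hpos, by module⟩

end Roots3
section Aut
variable {V : Type*} [NormedAddCommGroup V] [InnerProductSpace ℝ V] [FiniteDimensional ℝ V]
variable {Rs : RootSystemData V} {Δ : Finset V}

lemma mem_aut_iff {g : V ≃ₗ[ℝ] V} :
    g ∈ Rs.aut ↔ ∀ α : V, α ∈ Rs.carrier ↔ g α ∈ Rs.carrier := Iff.rfl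

lemma aut_mem_carrier {g : V ≃ₗ[ℝ] V} (hg : g ∈ Rs.aut) {α : V} (hα : α ∈ Rs.carrier) :
    g α ∈ Rs.carrier := (mem_aut_iff.mp hg α).mp hα

lemma pos_image {g : V ≃ₗ[ℝ] V} (h : ∀ β ∈ Δ, RSPos Δ (g β)) {α : V}
    (hpos : RSPos Δ α) : RSPos Δ (g α) := by
  classical
  obtain ⟨c, hc, hsum⟩ := hpos
  choose! d hd using h
  refine ⟨fun γ => ∑ β ∈ Δ, c β * d β γ, ?_, ?_⟩
  · intro γ hγ
    exact Finset.sum_nonneg fun β hβ => mul_nonneg (hc β hβ) ((hd β hβ).1 γ hγ)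
  · rw [hsum, map_sum]
    calc ∑ β ∈ Δ, g (c β • β) = ∑ β ∈ Δ, c β • g β := by
          exact Finset.sum_congr rfl fun β _ => by rw [map_smul]
      _ = ∑ β ∈ Δ, c β • ∑ γ ∈ Δ, d β γ • γ := by
          exact Finset.sum_congr rfl fun β hβ => by rw [(hd β hβ).2]
      _ = ∑ β ∈ Δ, ∑ γ ∈ Δ, (c β * d β γ) • γ := by
          refine Finset.sum_congr rfl fun β _ => ?_
          rw [Finset.smul_sum]
          exact Finset.sum_congr rfl fun γ _ => by rw [smul_smul]
      _ = ∑ γ ∈ Δ, ∑ β ∈ Δ, (c β * d β γ) • γ := Finset.sum_comm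
      _ = ∑ γ ∈ Δ, (∑ β ∈ Δ, c β * d β γ) • γ := by
          exact Finset.sum_congr rfl fun γ _ => by rw [Finset.sum_smul]

/-- The permutation of the set of roots induced by an automorphism. -/
def autPerm (Rs : RootSystemData V) : ↥Rs.aut →* Equiv.Perm {x : V // x ∈ Rs.carrier} where
  toFun g := Equiv.subtypeEquiv (g : V ≃ₗ[ℝ] V).toEquiv g.2
  map_one' := by ext x; rfl
  map_mul' g h := by ext x; rfl

lemma autPerm_apply_coe (g : ↥Rs.aut) (x : {x : V // x ∈ Rs.carrier}) :
    ((autPerm Rs g) x : V) = (g : V ≃ₗ[ℝ] V) x.1 := rfl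

lemma image_simple_of_pos (hΔ : Rs.IsSimpleSystem Δ) (g : ↥Rs.aut)
    (h : ∀ α ∈ Rs.carrier, RSPos Δ α → RSPos Δ ((g : V ≃ₗ[ℝ] V) α)) :
    ⇑(g : V ≃ₗ[ℝ] V) '' ↑Δ = ↑Δ := by
  classical
  set ge : V ≃ₗ[ℝ] V := (g : V ≃ₗ[ℝ] V) with hge
  have hinj : Function.Injective ⇑ge := ge.injective
  set P : Finset V := Rs.carrier.filter (fun α => RSPos Δ α) with hP
  have hmapsto : ∀ α ∈ P, ge α ∈ P := by
    intro α hα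
    rw [hP, Finset.mem_filter] at hα ⊢
    exact ⟨aut_mem_carrier g.2 hα.1, h α hα.1 hα.2⟩
  have himg : P.image ⇑ge = P := by
    apply Finset.eq_of_subset_of_card_le
    · intro x hx
      obtain ⟨α, hα, rfl⟩ := Finset.mem_image.mp hx
      exact hmapsto α hα
    · rw [Finset.card_image_of_injective _ hinj]
  have hsurj : ∀ β ∈ P, ∃ α ∈ P, ge α = β := by
    intro β hβ
    rw [← himg] at hβ
    exact Finset.mem_image.mp hβ
  have hmem : ∀ δ ∈ Δ, ge δ ∈ Δ := by
    intro δ hδ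
    have hδR : δ ∈ Rs.carrier := hΔ.1 hδ
    have hδP : δ ∈ P := Finset.mem_filter.mpr ⟨hδR, simple_pos hδ⟩
    have hgP : ge δ ∈ P := hmapsto δ hδP
    rw [hP, Finset.mem_filter] at hgP
    apply pos_indec_mem_simple hΔ hgP.1 hgP.2
    rintro ⟨β, γ, hβR, hβpos, hγR, hγpos, hsum⟩
    obtain ⟨β', hβ'P, hβ'⟩ := hsurj β (Finset.mem_filter.mpr ⟨hβR, hβpos⟩)
    obtain ⟨γ', hγ'P, hγ'⟩ := hsurj γ (Finset.mem_filter.mpr ⟨hγR, hγpos⟩)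
    have hδeq : δ = β' + γ' := by
      apply hinj
      rw [map_add, hβ', hγ', ← hsum]
    rw [hP, Finset.mem_filter] at hβ'P hγ'P
    exact simple_indec hΔ hδ ⟨β', γ', hβ'P.1, hβ'P.2, hγ'P.1, hγ'P.2, hδeq⟩
  have hfin : Δ.image ⇑ge = Δ := by
    apply Finset.eq_of_subset_of_card_le
    · intro x hx
      obtain ⟨α, hα, rfl⟩ := Finset.mem_image.mp hx
      exact hmem α hα
    · rw [Finset.card_image_of_injective _ hinj]
  rw [← Finset.coe_image, hfin]

/-- The set of positive roots sent to negative roots by `g`. -/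
noncomputable def negSet (Rs : RootSystemData V) (Δ : Finset V) (g : V ≃ₗ[ℝ] V) : Finset V := by
  classical
  exact Rs.carrier.filter (fun α => RSPos Δ α ∧ RSPos Δ (-(g α)))

lemma mem_negSet {g : V ≃ₗ[ℝ] V} {α : V} :
    α ∈ negSet Rs Δ g ↔ α ∈ Rs.carrier ∧ RSPos Δ α ∧ RSPos Δ (-(g α)) := by
  classical
  simp [negSet]

end Aut
section Gen
variable {V : Type*} [NormedAddCommGroup V] [InnerProductSpace ℝ V] [FiniteDimensional ℝ V]
variable {Rs : RootSystemData V} {Δ : Finset V}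

lemma linEquiv_mul_apply (f g : V ≃ₗ[ℝ] V) (x : V) : (f * g) x = f (g x) := rfl

lemma negSet_step [DecidableEq V] (hΔ : Rs.IsSimpleSystem Δ) {g : V ≃ₗ[ℝ] V} (hg : g ∈ Rs.aut)
    {δ : V} (hδ : δ ∈ Δ) (hgδ : RSPos Δ (-(g δ))) :
    negSet Rs Δ (g * reflRoot δ) = Finset.image (⇑(reflRoot δ)) ((negSet Rs Δ g).erase δ) := by
  classical
  have hδR : δ ∈ Rs.carrier := hΔ.1 hδ
  have hδ0 : δ ≠ 0 := Rs.ne_zero δ hδR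
  have hgδR : g δ ∈ Rs.carrier := aut_mem_carrier hg hδR
  ext β
  simp only [Finset.mem_image, Finset.mem_erase, mem_negSet]
  constructor
  · rintro ⟨hβR, hβpos, hβneg⟩
    have hβδ : β ≠ δ := by
      rintro rfl
      rw [linEquiv_mul_apply, reflRoot_self hδ0, map_neg, neg_neg] at hβneg
      exact not_pos_both hΔ (Rs.ne_zero _ hgδR) hβneg hgδ
    refine ⟨reflRoot δ β, ⟨(reflRoot_pos hΔ hβR hδ hβδ hβpos).2,
      reflRoot_mem_carrier hδR hβR, (reflRoot_pos hΔ hβR hδ hβδ hβpos).1, ?_⟩,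
      reflRoot_involutive δ β⟩
    rwa [linEquiv_mul_apply] at hβneg
  · rintro ⟨α, ⟨hαδ, hαR, hαpos, hαneg⟩, rfl⟩
    refine ⟨reflRoot_mem_carrier hδR hαR, (reflRoot_pos hΔ hαR hδ hαδ hαpos).1, ?_⟩
    rw [linEquiv_mul_apply, reflRoot_involutive]
    exact hαneg

lemma reflRoot_sq {δ : V} (hδ0 : δ ≠ 0) : reflRoot δ * reflRoot δ = 1 := by
  apply LinearEquiv.toLinearMap_injective
  apply LinearMap.ext
  intro x
  exact reflRoot_involutive δ x

lemma closure_gen (hΔ : Rs.IsSimpleSystem Δ) (g : ↥Rs.aut) :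
    g ∈ Subgroup.closure
      ({s : ↥Rs.aut | ∃ δ ∈ Δ, (s : V ≃ₗ[ℝ] V) = reflRoot δ} ∪
        {s : ↥Rs.aut | ⇑(s : V ≃ₗ[ℝ] V) '' ↑Δ = ↑Δ}) := by
  classical
  set Sset : Set ↥Rs.aut := ({s : ↥Rs.aut | ∃ δ ∈ Δ, (s : V ≃ₗ[ℝ] V) = reflRoot δ} ∪
        {s : ↥Rs.aut | ⇑(s : V ≃ₗ[ℝ] V) '' ↑Δ = ↑Δ}) with hSset
  letI : DecidableEq V := Classical.decEq V
  suffices h : ∀ N : ℕ, ∀ g : ↥Rs.aut, (negSet Rs Δ (g : V ≃ₗ[ℝ] V)).card ≤ N →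
      g ∈ Subgroup.closure Sset by
    exact h _ g le_rfl
  intro N
  induction N with
  | zero =>
    intro g hg0
    have hempty : negSet Rs Δ (g : V ≃ₗ[ℝ] V) = ∅ :=
      Finset.card_eq_zero.mp (Nat.le_zero.mp hg0)
    have hpos : ∀ α ∈ Rs.carrier, RSPos Δ α → RSPos Δ ((g : V ≃ₗ[ℝ] V) α) := by
      intro α hαR hαpos
      have hgα : (g : V ≃ₗ[ℝ] V) α ∈ Rs.carrier := aut_mem_carrier g.2 hαR
      rcases pos_or_negpos hΔ hgα with h | h
      · exact h
      · exfalso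
        have : α ∈ negSet Rs Δ (g : V ≃ₗ[ℝ] V) := mem_negSet.mpr ⟨hαR, hαpos, h⟩
        rw [hempty] at this
        exact absurd this (Finset.notMem_empty α)
    exact Subgroup.subset_closure (Or.inr (image_simple_of_pos hΔ g hpos))
  | succ N ih =>
    intro g hgcard
    by_cases h0 : (negSet Rs Δ (g : V ≃ₗ[ℝ] V)).card = 0
    · -- same as base case
      have hempty : negSet Rs Δ (g : V ≃ₗ[ℝ] V) = ∅ := Finset.card_eq_zero.mp h0
      have hpos : ∀ α ∈ Rs.carrier, RSPos Δ α → RSPos Δ ((g : V ≃ₗ[ℝ] V) α) := by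
        intro α hαR hαpos
        have hgα : (g : V ≃ₗ[ℝ] V) α ∈ Rs.carrier := aut_mem_carrier g.2 hαR
        rcases pos_or_negpos hΔ hgα with h | h
        · exact h
        · exfalso
          have : α ∈ negSet Rs Δ (g : V ≃ₗ[ℝ] V) := mem_negSet.mpr ⟨hαR, hαpos, h⟩
          rw [hempty] at this
          exact absurd this (Finset.notMem_empty α)
      exact Subgroup.subset_closure (Or.inr (image_simple_of_pos hΔ g hpos))
    · -- find a simple root sent to a negative root
      have hex : ∃ δ ∈ Δ, RSPos Δ (-(( g : V ≃ₗ[ℝ] V) δ)) := by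
        by_contra hcon
        push_neg at hcon
        have hsimp : ∀ β ∈ Δ, RSPos Δ ((g : V ≃ₗ[ℝ] V) β) := by
          intro β hβ
          have hβR : β ∈ Rs.carrier := hΔ.1 hβ
          have hgβ : (g : V ≃ₗ[ℝ] V) β ∈ Rs.carrier := aut_mem_carrier g.2 hβR
          rcases pos_or_negpos hΔ hgβ with h | h
          · exact h
          · exact absurd h (hcon β hβ)
        apply h0
        rw [Finset.card_eq_zero, Finset.eq_empty_iff_forall_notMem]
        intro α hα
        rw [mem_negSet] at hα
        obtain ⟨hαR, hαpos, hαneg⟩ := hα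
        have := pos_image hsimp hαpos
        exact not_pos_both hΔ (Rs.ne_zero _ (aut_mem_carrier g.2 hαR)) this hαneg
      obtain ⟨δ, hδ, hgδ⟩ := hex
      have hδR : δ ∈ Rs.carrier := hΔ.1 hδ
      have hδ0 : δ ≠ 0 := Rs.ne_zero δ hδR
      set s : ↥Rs.aut := ⟨reflRoot δ, reflRoot_mem_aut hδR⟩ with hs
      have hδmem : δ ∈ negSet Rs Δ (g : V ≃ₗ[ℝ] V) :=
        mem_negSet.mpr ⟨hδR, simple_pos hδ, hgδ⟩
      have hcard : (negSet Rs Δ ((g * s : ↥Rs.aut) : V ≃ₗ[ℝ] V)).card ≤ N := by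
        have hco : ((g * s : ↥Rs.aut) : V ≃ₗ[ℝ] V) = (g : V ≃ₗ[ℝ] V) * reflRoot δ := rfl
        rw [hco, negSet_step hΔ g.2 hδ hgδ,
          Finset.card_image_of_injective _ (reflRoot δ).injective,
          Finset.card_erase_of_mem hδmem]
        omega
      have hgs : (g * s : ↥Rs.aut) ∈ Subgroup.closure Sset := ih (g * s) hcard
      have hsmem : s ∈ Subgroup.closure Sset :=
        Subgroup.subset_closure (Or.inl ⟨δ, hδ, rfl⟩)
      have hgeq : g = (g * s) * s := by
        rw [mul_assoc]
        have : s * s = 1 := by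
          apply Subtype.ext
          show (reflRoot δ) * (reflRoot δ) = 1
          exact reflRoot_sq hδ0
        rw [this, mul_one]
      rw [hgeq]
      exact mul_mem hgs hsmem

end Gen
section Signs
variable {V : Type*} [NormedAddCommGroup V] [InnerProductSpace ℝ V] [FiniteDimensional ℝ V]
variable {Rs : RootSystemData V} {Δ : Finset V}

/-- Negation as a permutation of the set of roots. -/
def negPerm (Rs : RootSystemData V) : Equiv.Perm {x : V // x ∈ Rs.carrier} :=
  Function.Involutive.toPerm
    (fun x => ⟨-x.1, neg_mem_carrier x.2⟩)
    (fun x => Subtype.ext (neg_neg x.1))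

lemma negPerm_apply (x : {x : V // x ∈ Rs.carrier}) : (negPerm Rs x : V) = -x.1 := rfl

lemma sign_autPerm_stab [DecidableEq V] (hΔ : Rs.IsSimpleSystem Δ) (g : ↥Rs.aut)
    (hg : ⇑(g : V ≃ₗ[ℝ] V) '' ↑Δ = ↑Δ) :
    Equiv.Perm.sign (autPerm Rs g) = 1 := by
  apply sign_eq_one_of_double (autPerm Rs g) (fun x => RSPos Δ x.1) (negPerm Rs)
  · exact fun x => Subtype.ext (neg_neg x.1)
  · intro x hx
    rcases pos_or_negpos hΔ x.2 with h | h
    · exact absurd h hx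
    · exact h
  · rintro x ⟨h1, h2⟩
    exact not_pos_both hΔ (Rs.ne_zero x.1 x.2) h1 h2
  · intro x
    apply Subtype.ext
    show (g : V ≃ₗ[ℝ] V) (-x.1) = -((g : V ≃ₗ[ℝ] V) x.1)
    rw [map_neg]
  · intro x hx
    show RSPos Δ ((g : V ≃ₗ[ℝ] V) x.1)
    have hsimp : ∀ β ∈ Δ, RSPos Δ ((g : V ≃ₗ[ℝ] V) β) := by
      intro β hβ
      have : (g : V ≃ₗ[ℝ] V) β ∈ ⇑(g : V ≃ₗ[ℝ] V) '' ↑Δ := Set.mem_image_of_mem _ hβ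
      rw [hg] at this
      exact simple_pos this
    exact pos_image hsimp hx

lemma sign_autPerm_refl [DecidableEq V] (hΔ : Rs.IsSimpleSystem Δ) {δ : V} (hδ : δ ∈ Δ)
    (hmem : reflRoot δ ∈ Rs.aut) :
    Equiv.Perm.sign (autPerm Rs ⟨reflRoot δ, hmem⟩) = -1 := by
  have hδR : δ ∈ Rs.carrier := hΔ.1 hδ
  have hδ0 : δ ≠ 0 := Rs.ne_zero δ hδR
  apply sign_eq_neg_one_of_refl (autPerm Rs ⟨reflRoot δ, hmem⟩) (fun x => RSPos Δ x.1)
    (negPerm Rs) ⟨δ, hδR⟩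
  · exact fun x => Subtype.ext (neg_neg x.1)
  · intro x hx
    rcases pos_or_negpos hΔ x.2 with h | h
    · exact absurd h hx
    · exact h
  · rintro x ⟨h1, h2⟩
    exact not_pos_both hΔ (Rs.ne_zero x.1 x.2) h1 h2
  · intro x
    apply Subtype.ext
    show reflRoot δ (-x.1) = -(reflRoot δ x.1)
    rw [map_neg]
  · exact simple_pos hδ
  · apply Subtype.ext
    show reflRoot δ δ = -δ
    exact reflRoot_self hδ0
  · intro x hx hne
    have hxδ : x.1 ≠ δ := fun h => hne (Subtype.ext h)
    have h1 := (reflRoot_pos hΔ x.2 hδ hxδ hx).1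
    have h2 := (reflRoot_pos hΔ x.2 hδ hxδ hx).2
    refine ⟨h1, ?_, ?_⟩
    · intro hcon
      exact h2 (congrArg Subtype.val hcon)
    · intro hcon
      have : reflRoot δ x.1 = -δ := congrArg Subtype.val hcon
      exact pos_vec_ne_neg_simple hΔ (reflRoot_mem_carrier hδR x.2) h1 hδ this

end Signs
section Even
variable {V : Type*} [NormedAddCommGroup V] [InnerProductSpace ℝ V] [FiniteDimensional ℝ V]
variable {Rs : RootSystemData V} {Δ : Finset V}

lemma carrier_card_even (hΔ : Rs.IsSimpleSystem Δ) : Even Rs.carrier.card := by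
  classical
  set P := Rs.carrier.filter (fun α => RSPos Δ α) with hP
  set N := Rs.carrier.filter (fun α => ¬ RSPos Δ α) with hN
  have hPN : P.card + N.card = Rs.carrier.card :=
    Finset.card_filter_add_card_filter_not _
  have hNimg : N = P.image (fun x => -x) := by
    ext x
    simp only [hP, hN, Finset.mem_filter, Finset.mem_image]
    constructor
    · rintro ⟨hxR, hxnp⟩
      have hnx : RSPos Δ (-x) := (pos_or_negpos hΔ hxR).resolve_left hxnp
      exact ⟨-x, ⟨neg_mem_carrier hxR, hnx⟩, neg_neg x⟩
    · rintro ⟨y, ⟨hyR, hypos⟩, rfl⟩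
      exact ⟨neg_mem_carrier hyR,
        fun hcon => not_pos_both hΔ (Rs.ne_zero y hyR) hypos hcon⟩
  have hcards : N.card = P.card := by
    rw [hNimg, Finset.card_image_of_injective _ neg_injective]
  exact ⟨P.card, by omega⟩

end Even


/-- The sign character `sgn_R` of the automorphism group of a reduced root system `R` — the
unique homomorphism to `{±1}` trivial on the stabiliser of a system of simple roots and
sending each reflection in a simple root to `-1` — satisfies, for every automorphism `v`,
`sgn_R(v) = (-1)^{|R|} · (-1)^{#orbits of ⟨v⟩ on R}`; equivalently (since `|R|` is even)
`sgn_R(v) = (-1)^{|⟨v⟩\R|}`. -/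
theorem sgn_eq_perm_sign
    {V : Type*} [NormedAddCommGroup V] [InnerProductSpace ℝ V] [FiniteDimensional ℝ V]
    (Rs : RootSystemData V) (Δ : Finset V) (hΔ : Rs.IsSimpleSystem Δ)
    (ε : ↥Rs.aut →* ℤˣ)
    (hstab : ∀ g : Rs.aut, ⇑(g : V ≃ₗ[ℝ] V) '' ↑Δ = ↑Δ → ε g = 1)
    (hrefl : ∀ α ∈ Δ, ∀ hα : reflRoot α ∈ Rs.aut, ε ⟨reflRoot α, hα⟩ = -1)
    (v : Rs.aut) :
    ε v = (-1 : ℤˣ) ^ Rs.carrier.card *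
        (-1 : ℤˣ) ^ Nat.card (Quotient (orbitSetoidOn (v : V ≃ₗ[ℝ] V) Rs.carrier)) ∧
    ε v = (-1 : ℤˣ) ^ Nat.card (Quotient (orbitSetoidOn (v : V ≃ₗ[ℝ] V) Rs.carrier)) := by
  classical
  have hkey : ε v = Equiv.Perm.sign (autPerm Rs v) := by
    have hv := closure_gen hΔ v
    refine Subgroup.closure_induction
      (p := fun g _ => ε g = Equiv.Perm.sign (autPerm Rs g)) ?_ ?_ ?_ ?_ hv
    · rintro x (⟨δ, hδ, hx⟩ | hx)
      · have hmem : reflRoot δ ∈ Rs.aut := hx ▸ x.2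
        have hxeq : x = ⟨reflRoot δ, hmem⟩ := Subtype.ext hx
        rw [hxeq, hrefl δ hδ hmem, sign_autPerm_refl hΔ hδ hmem]
      · rw [hstab x hx, sign_autPerm_stab hΔ x hx]
    · show ε 1 = Equiv.Perm.sign (autPerm Rs 1)
      rw [map_one, map_one, map_one]
    · intro a b _ _ hpa hpb
      have hpa' : ε a = Equiv.Perm.sign (autPerm Rs a) := hpa
      have hpb' : ε b = Equiv.Perm.sign (autPerm Rs b) := hpb
      show ε (a * b) = Equiv.Perm.sign (autPerm Rs (a * b))
      rw [map_mul, map_mul, map_mul, hpa', hpb']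
    · intro a _ hpa
      have hpa' : ε a = Equiv.Perm.sign (autPerm Rs a) := hpa
      show ε a⁻¹ = Equiv.Perm.sign (autPerm Rs a⁻¹)
      rw [map_inv, map_inv, map_inv, hpa']
  have hsetoid : orbitSetoidOn (v : V ≃ₗ[ℝ] V) Rs.carrier = sameCycleSetoid (autPerm Rs v) := by
    apply Setoid.ext
    intro x y
    have hz : ∀ n : ℤ, (((autPerm Rs v) ^ n) x : V) = (((v : V ≃ₗ[ℝ] V)) ^ n) x.1 := by
      intro n
      rw [← map_zpow, autPerm_apply_coe, SubgroupClass.coe_zpow]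
    constructor
    · rintro ⟨n, hn⟩
      exact ⟨n, Subtype.ext (by rw [hz n]; exact hn)⟩
    · rintro ⟨n, hn⟩
      refine ⟨n, ?_⟩
      rw [← hz n, hn]
  have hsign := sign_eq_card_mul_orbits (autPerm Rs v)
  have hcard : Fintype.card {x : V // x ∈ Rs.carrier} = Rs.carrier.card := Fintype.card_coe _
  rw [hcard] at hsign
  have heq1 : ε v = (-1 : ℤˣ) ^ Rs.carrier.card *
      (-1 : ℤˣ) ^ Nat.card (Quotient (orbitSetoidOn (v : V ≃ₗ[ℝ] V) Rs.carrier)) := by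
    rw [hkey, hsign, hsetoid]
  refine ⟨heq1, ?_⟩
  rw [heq1]
  have : (-1 : ℤˣ) ^ Rs.carrier.card = 1 := (carrier_card_even hΔ).neg_one_pow
  rw [this, one_mul]
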